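/- Let A and B be independent, identically distributed real-valued random variables whose common law has a continuous probability density function f with cumulative distribution function F. Then the random variable X = sign(A) · sign(B) · min(|A|, |B|) has probability density function f_X(x) = 2 f(x) (1 − F(|x|)) + 2 f(−x) F(−|x|). -/

import Mathlib

open Real MeasureTheory ProbabilityTheory
open Set Filter Topology

private lemma hasDerivAt_mul_abs' (y : ℝ) : HasDerivAt (fun z : ℝ => z * |z|) (2 * |y|) y := by
  rcases lt_trichotomy y 0 with hy | hy | hy
  · have h : HasDerivAt (fun z : ℝ => -(z^2)) (2 * |y|) y := by
      have := (hasDerivAt_pow 2 y).neg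
      refine this.congr_deriv ?_
      rw [abs_of_neg hy]; push_cast; ring
    refine h.congr_of_eventuallyEq ?_
    filter_upwards [Iio_mem_nhds hy] with z hz
    rw [abs_of_neg hz]; ring
  · subst hy
    rw [hasDerivAt_iff_tendsto_slope]
    have h : Tendsto (fun z : ℝ => |z|) (𝓝[≠] (0:ℝ)) (𝓝 (0:ℝ)) := by
      have := (continuous_abs.tendsto (0:ℝ))
      simpa using this.mono_left nhdsWithin_le_nhds
    have heq : (fun z : ℝ => |z|) =ᶠ[𝓝[≠] (0:ℝ)] slope (fun z : ℝ => z * |z|) 0 := by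
      filter_upwards [self_mem_nhdsWithin] with z hz
      have hz' : z ≠ 0 := hz
      rw [slope_def_field]
      field_simp
      simp
    simpa using h.congr' heq
  · have h : HasDerivAt (fun z : ℝ => z^2) (2 * |y|) y := by
      have := hasDerivAt_pow 2 y
      refine this.congr_deriv ?_
      rw [abs_of_pos hy]; push_cast; ring
    refine h.congr_of_eventuallyEq ?_
    filter_upwards [Ioi_mem_nhds hy] with z hz
    rw [abs_of_pos hz]; ring

private lemma hasDerivAt_min_sq' (y : ℝ) :
    HasDerivAt (fun z : ℝ => (min z 0)^2) (2 * min y 0) y := by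
  have hfun : (fun z : ℝ => (min z 0)^2) = fun z : ℝ => (z^2 - z * |z|) / 2 := by
    funext z
    rcases le_or_gt z 0 with hz | hz
    · rw [min_eq_left hz, abs_of_nonpos hz]; ring
    · rw [min_eq_right hz.le, abs_of_pos hz]; ring
  rw [hfun]
  have h := ((hasDerivAt_pow 2 y).sub (hasDerivAt_mul_abs' y)).div_const 2
  refine h.congr_deriv ?_
  rcases le_or_gt y 0 with hy | hy
  · rw [min_eq_left hy, abs_of_nonpos hy]; push_cast; ring
  · rw [min_eq_right hy.le, abs_of_pos hy]; push_cast; ring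

private lemma key_sign_ge (t a b : ℝ) (ht : 0 ≤ t) :
    Real.sign a * Real.sign b * min |a| |b| ≤ t ↔
      ¬((t < a ∧ t < b) ∨ (a < -t ∧ b < -t)) := by
  rcases lt_trichotomy a 0 with ha | ha | ha
  · rcases lt_trichotomy b 0 with hb | hb | hb
    · rw [Real.sign_of_neg ha, Real.sign_of_neg hb, abs_of_neg ha, abs_of_neg hb,
        show (-1 : ℝ) * -1 * min (-a) (-b) = min (-a) (-b) from by ring, min_le_iff]
      constructor
      · rintro (h | h) <;> rintro (⟨h1, h2⟩ | ⟨h1, h2⟩) <;> linarith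
      · intro h
        by_cases hc : -a ≤ t
        · exact Or.inl hc
        · push_neg at hc
          by_contra hc2
          push_neg at hc2
          exact h (Or.inr ⟨by linarith, by linarith⟩)
    · subst hb
      rw [Real.sign_zero, mul_zero, zero_mul]
      exact ⟨fun _ => by rintro (⟨h1, h2⟩ | ⟨h1, h2⟩) <;> linarith, fun _ => ht⟩
    · rw [Real.sign_of_neg ha, Real.sign_of_pos hb]
      constructor
      · intro _; rintro (⟨h1, h2⟩ | ⟨h1, h2⟩) <;> linarith
      · intro _
        have h0 : (0:ℝ) ≤ min |a| |b| := le_min (abs_nonneg a) (abs_nonneg b)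
        nlinarith
  · subst ha
    rw [Real.sign_zero, zero_mul, zero_mul]
    exact ⟨fun _ => by rintro (⟨h1, h2⟩ | ⟨h1, h2⟩) <;> linarith, fun _ => ht⟩
  · rcases lt_trichotomy b 0 with hb | hb | hb
    · rw [Real.sign_of_pos ha, Real.sign_of_neg hb]
      constructor
      · intro _; rintro (⟨h1, h2⟩ | ⟨h1, h2⟩) <;> linarith
      · intro _
        have h0 : (0:ℝ) ≤ min |a| |b| := le_min (abs_nonneg a) (abs_nonneg b)
        nlinarith
    · subst hb
      rw [Real.sign_zero, mul_zero, zero_mul]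
      exact ⟨fun _ => by rintro (⟨h1, h2⟩ | ⟨h1, h2⟩) <;> linarith, fun _ => ht⟩
    · rw [Real.sign_of_pos ha, Real.sign_of_pos hb, abs_of_pos ha, abs_of_pos hb,
        show (1 : ℝ) * 1 * min a b = min a b from by ring, min_le_iff]
      constructor
      · rintro (h | h) <;> rintro (⟨h1, h2⟩ | ⟨h1, h2⟩) <;> linarith
      · intro h
        by_cases hc : a ≤ t
        · exact Or.inl hc
        · push_neg at hc
          by_contra hc2
          push_neg at hc2
          exact h (Or.inl ⟨hc, by linarith⟩)

private lemma key_sign_lt (t a b : ℝ) (ht : t < 0) :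
    Real.sign a * Real.sign b * min |a| |b| ≤ t ↔
      ((-t ≤ a ∧ b ≤ t) ∨ (a ≤ t ∧ -t ≤ b)) := by
  rcases lt_trichotomy a 0 with ha | ha | ha
  · rcases lt_trichotomy b 0 with hb | hb | hb
    · rw [Real.sign_of_neg ha, Real.sign_of_neg hb, abs_of_neg ha, abs_of_neg hb]
      constructor
      · intro h
        have h0 : (0:ℝ) < min (-a) (-b) := lt_min (by linarith) (by linarith)
        linarith
      · rintro (⟨h1, h2⟩ | ⟨h1, h2⟩) <;> linarith
    · subst hb
      rw [Real.sign_zero, mul_zero, zero_mul]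
      exact ⟨fun h => absurd h (by linarith), by rintro (⟨h1, h2⟩ | ⟨h1, h2⟩) <;> linarith⟩
    · rw [Real.sign_of_neg ha, Real.sign_of_pos hb, abs_of_neg ha, abs_of_pos hb]
      constructor
      · intro h
        right
        have h' : -t ≤ min (-a) b := by linarith
        obtain ⟨hh1, hh2⟩ := le_min_iff.1 h'
        exact ⟨by linarith, hh2⟩
      · rintro (⟨h1, h2⟩ | ⟨h1, h2⟩)
        · linarith
        · have h' : -t ≤ min (-a) b := le_min (by linarith) h2
          linarith
  · subst ha
    rw [Real.sign_zero, zero_mul, zero_mul]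
    exact ⟨fun h => absurd h (by linarith), by rintro (⟨h1, h2⟩ | ⟨h1, h2⟩) <;> linarith⟩
  · rcases lt_trichotomy b 0 with hb | hb | hb
    · rw [Real.sign_of_pos ha, Real.sign_of_neg hb, abs_of_pos ha, abs_of_neg hb]
      constructor
      · intro h
        left
        have h' : -t ≤ min a (-b) := by linarith
        obtain ⟨hh1, hh2⟩ := le_min_iff.1 h'
        exact ⟨hh1, by linarith⟩
      · rintro (⟨h1, h2⟩ | ⟨h1, h2⟩)
        · have h' : -t ≤ min a (-b) := le_min h1 (by linarith)
          linarith
        · linarith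
    · subst hb
      rw [Real.sign_zero, mul_zero, zero_mul]
      exact ⟨fun h => absurd h (by linarith), by rintro (⟨h1, h2⟩ | ⟨h1, h2⟩) <;> linarith⟩
    · rw [Real.sign_of_pos ha, Real.sign_of_pos hb, abs_of_pos ha, abs_of_pos hb]
      constructor
      · intro h
        have h0 : (0:ℝ) < min a b := lt_min ha hb
        linarith
      · rintro (⟨h1, h2⟩ | ⟨h1, h2⟩) <;> linarith

theorem density_of_signed_min
    {Ω : Type*} [MeasurableSpace Ω] (μ : Measure Ω) [IsProbabilityMeasure μ]
    (A B : Ω → ℝ) (hA : Measurable A) (hB : Measurable B)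
    (hindep : IndepFun A B μ)
    (hid : IdentDistrib A B μ μ)
    (f : ℝ → ℝ) (hf_cont : Continuous f) (hf_nonneg : ∀ x, 0 ≤ f x)
    (hf_density : μ.map A = volume.withDensity (fun x => ENNReal.ofReal (f x)))
    (F : ℝ → ℝ) (hF : ∀ x, F x = ∫ t in Set.Iic x, f t)
    (X : Ω → ℝ)
    (hX : ∀ ω, X ω = Real.sign (A ω) * Real.sign (B ω) * min |A ω| |B ω|) :
    μ.map X = volume.withDensity
      (fun x => ENNReal.ofReal (2 * f x * (1 - F |x|) + 2 * f (-x) * F (-|x|))) := by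
  set g : ℝ → ℝ := fun x => 2 * f x * (1 - F |x|) + 2 * f (-x) * F (-|x|) with hg
  set G : ℝ → ℝ := fun x => 2 * F x - (F x)^2 - (F (-x))^2 + (min (F x - F (-x)) 0)^2 with hG
  -- measurability of X
  have hsign : Measurable Real.sign := by
    have h : Real.sign = fun r : ℝ => if r < 0 then (-1:ℝ) else if 0 < r then 1 else 0 := rfl
    rw [h]
    exact Measurable.ite (measurableSet_lt measurable_id measurable_const) measurable_const
      (Measurable.ite (measurableSet_lt measurable_const measurable_id) measurable_const
        measurable_const)
  have hXm : Measurable X := by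
    have h : X = fun ω => Real.sign (A ω) * Real.sign (B ω) * min |A ω| |B ω| := funext hX
    rw [h]
    exact ((hsign.comp hA).mul (hsign.comp hB)).mul (hA.abs.min hB.abs)
  haveI : IsProbabilityMeasure (μ.map A) := Measure.isProbabilityMeasure_map hA.aemeasurable
  haveI : IsProbabilityMeasure (μ.map X) := Measure.isProbabilityMeasure_map hXm.aemeasurable
  -- integrability and total mass of f
  have hlint : ∫⁻ x, ENNReal.ofReal (f x) = 1 := by
    have h := (measure_univ (μ := μ.map A))
    rwa [hf_density, withDensity_apply _ MeasurableSet.univ, Measure.restrict_univ] at h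
  have hInt : Integrable f := by
    refine ⟨hf_cont.aestronglyMeasurable, ?_⟩
    rw [hasFiniteIntegral_iff_ofReal (ae_of_all _ hf_nonneg), hlint]
    exact ENNReal.one_lt_top
  have htot : ∫ x, f x = 1 := by
    have h := ofReal_integral_eq_lintegral_ofReal hInt (ae_of_all _ hf_nonneg)
    rw [hlint] at h
    exact ENNReal.ofReal_eq_one.1 h
  -- basic properties of F
  have hFderiv : ∀ x, HasDerivAt F (f x) x := by
    intro x
    have heq : ∀ y, F y = F 0 + ∫ u in (0:ℝ)..y, f u := by
      intro y
      rw [hF y, hF 0, ← intervalIntegral.integral_Iic_sub_Iic hInt.integrableOn hInt.integrableOn]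
      ring
    have hprim : HasDerivAt (fun y => F 0 + ∫ u in (0:ℝ)..y, f u) (f x) x := by
      refine HasDerivAt.const_add _ ?_
      exact intervalIntegral.integral_hasDerivAt_right hInt.intervalIntegrable
        (hf_cont.stronglyMeasurableAtFilter _ _) hf_cont.continuousAt
    exact hprim.congr_of_eventuallyEq (Eventually.of_forall heq)
  have hFcont : Continuous F :=
    continuous_iff_continuousAt.2 fun x => (hFderiv x).continuousAt
  have hF0 : ∀ t, 0 ≤ F t := fun t => by
    rw [hF]; exact setIntegral_nonneg measurableSet_Iic fun x _ => hf_nonneg x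
  have hFle1 : ∀ t, F t ≤ 1 := fun t => by
    rw [hF, ← htot]
    exact setIntegral_le_integral hInt (ae_of_all _ hf_nonneg)
  have hFmono : Monotone F := by
    intro a b hab
    rw [hF a, hF b]
    exact setIntegral_mono_set hInt.integrableOn (ae_of_all _ hf_nonneg)
      (HasSubset.Subset.eventuallyLE (Iic_subset_Iic.2 hab))
  have hFtop : Tendsto F atTop (𝓝 1) := by
    have h := tendsto_setIntegral_of_monotone (fun t : ℝ => measurableSet_Iic) monotone_Iic
      (by rw [iUnion_Iic]; exact hInt.integrableOn)
    rw [iUnion_Iic, Measure.restrict_univ, htot] at h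
    exact h.congr fun t => (hF t).symm
  have hFbot : Tendsto F atBot (𝓝 0) := by
    have hanti : Antitone (fun t : ℝ => Iic (-t)) := fun s t hst => Iic_subset_Iic.2 (by linarith)
    have h := tendsto_setIntegral_of_antitone (fun t : ℝ => measurableSet_Iic) hanti
      ⟨0, hInt.integrableOn⟩
    have hempty : (⋂ t : ℝ, Iic (-t)) = ∅ := by
      ext x
      simp only [mem_iInter, mem_Iic, mem_empty_iff_false, iff_false, not_forall, not_le]
      exact ⟨-x + 1, by linarith⟩
    rw [hempty] at h
    simp only [Measure.restrict_empty, integral_zero_measure] at h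
    have h2 : Tendsto (fun t : ℝ => F (-t)) atTop (𝓝 0) :=
      h.congr fun t => (hF (-t)).symm
    have h3 := h2.comp tendsto_neg_atBot_atTop
    exact h3.congr fun t => by simp
  -- properties of g
  have hg_cont : Continuous g := by
    apply Continuous.add
    · exact (continuous_const.mul hf_cont).mul
        (continuous_const.sub (hFcont.comp continuous_abs))
    · exact (continuous_const.mul (hf_cont.comp continuous_neg)).mul
        (hFcont.comp continuous_abs.neg)
  have hg_nonneg : ∀ x, 0 ≤ g x := by
    intro x
    have h1 : 0 ≤ 2 * f x * (1 - F |x|) := by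
      have := hf_nonneg x; have := hFle1 |x|; nlinarith
    have h2 : 0 ≤ 2 * f (-x) * F (-|x|) := by
      have := hf_nonneg (-x); have := hF0 (-|x|); nlinarith
    simpa [hg] using add_nonneg h1 h2
  have hg_int : Integrable g := by
    have hb : Integrable (fun x => 2 * f x + 2 * f (-x)) :=
      (hInt.const_mul 2).add ((hInt.comp_neg).const_mul 2)
    refine hb.mono' hg_cont.aestronglyMeasurable (ae_of_all _ fun x => ?_)
    rw [Real.norm_eq_abs, abs_of_nonneg (hg_nonneg x)]
    have h1 : 2 * f x * (1 - F |x|) ≤ 2 * f x := by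
      have := hf_nonneg x; have := hF0 |x|; nlinarith
    have h2 : 2 * f (-x) * F (-|x|) ≤ 2 * f (-x) := by
      have := hf_nonneg (-x); have := hFle1 (-|x|); nlinarith
    simpa [hg] using add_le_add h1 h2
  -- G is an antiderivative of g
  have hGderiv : ∀ x, HasDerivAt G (g x) x := by
    intro x
    have hFn : HasDerivAt (fun y => F (-y)) (-f (-x)) x := by
      have := (hFderiv (-x)).comp x (hasDerivAt_neg x)
      exact this.congr_deriv (by ring)
    have h1 : HasDerivAt (fun y => 2 * F y) (2 * f x) x := (hFderiv x).const_mul 2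
    have h2 : HasDerivAt (fun y => (F y)^2) (2 * F x * f x) x := by
      have := (hFderiv x).pow 2
      exact this.congr_deriv (by rw [show (2:ℕ) - 1 = 1 from rfl]; push_cast; ring)
    have h3 : HasDerivAt (fun y => (F (-y))^2) (2 * F (-x) * (-f (-x))) x := by
      have := hFn.pow 2
      exact this.congr_deriv (by rw [show (2:ℕ) - 1 = 1 from rfl]; push_cast; ring)
    have h4 : HasDerivAt (fun y => (min (F y - F (-y)) 0)^2)
        ((2 * min (F x - F (-x)) 0) * (f x - -f (-x))) x := by
      have := (hasDerivAt_min_sq' (F x - F (-x))).comp x ((hFderiv x).sub hFn)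
      exact this
    have hD : HasDerivAt G
        (2 * f x - 2 * F x * f x - 2 * F (-x) * (-f (-x))
          + (2 * min (F x - F (-x)) 0) * (f x - -f (-x))) x :=
      ((h1.sub h2).sub h3).add h4
    have hgx : g x = 2 * f x - 2 * F x * f x - 2 * F (-x) * (-f (-x))
        + (2 * min (F x - F (-x)) 0) * (f x - -f (-x)) := by
      rcases le_or_gt 0 x with hx | hx
      · have hmin : min (F x - F (-x)) 0 = 0 :=
          min_eq_right (sub_nonneg.2 (hFmono (by linarith)))
        rw [hg]
        simp only [abs_of_nonneg hx, hmin]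
        ring
      · have hmin : min (F x - F (-x)) 0 = F x - F (-x) :=
          min_eq_left (sub_nonpos.2 (hFmono (by linarith)))
        rw [hg]
        simp only [abs_of_neg hx, neg_neg, hmin]
        ring
    rw [hgx]
    exact hD
  have hFnegbot : Tendsto (fun x : ℝ => F (-x)) atBot (𝓝 1) :=
    hFtop.comp tendsto_neg_atBot_atTop
  have hGbot : Tendsto G atBot (𝓝 0) := by
    have h : Tendsto (fun x : ℝ => 2 * F x - (F x)^2 - (F (-x))^2 + (min (F x - F (-x)) 0)^2)
        atBot (𝓝 (2 * 0 - (0:ℝ)^2 - 1^2 + (min ((0:ℝ) - 1) 0)^2)) :=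
      ((((tendsto_const_nhds : Tendsto (fun _ : ℝ => (2:ℝ)) atBot _).mul hFbot).sub
        (hFbot.pow 2)).sub (hFnegbot.pow 2)).add
        (((hFbot.sub hFnegbot).min tendsto_const_nhds).pow 2)
    have h0 : (2 * 0 - (0:ℝ)^2 - 1^2 + (min ((0:ℝ) - 1) 0)^2) = 0 := by
      rw [min_eq_left (by norm_num : (0:ℝ) - 1 ≤ 0)]
      norm_num
    rw [h0] at h
    exact h
  -- RHS on Iic t
  have hRHS : ∀ t, (volume.withDensity fun x => ENNReal.ofReal (g x)) (Iic t)
      = ENNReal.ofReal (G t) := by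
    intro t
    rw [withDensity_apply _ measurableSet_Iic,
      ← ofReal_integral_eq_lintegral_ofReal hg_int.integrableOn
        (ae_of_all _ fun x => hg_nonneg x)]
    congr 1
    have hFTC : ∫ x in Iic t, g x = G t - 0 :=
      integral_Iic_of_hasDerivAt_of_tendsto' (a := t) (fun x _ => hGderiv x)
        hg_int.integrableOn hGbot
    rw [hFTC, sub_zero]
  -- law of A on intervals
  have hmapB : μ.map B = μ.map A := hid.map_eq.symm
  have hIic : ∀ t, μ.map A (Iic t) = ENNReal.ofReal (F t) := by
    intro t
    rw [hf_density, withDensity_apply _ measurableSet_Iic,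
      ← ofReal_integral_eq_lintegral_ofReal hInt.integrableOn
        (ae_of_all _ fun x => hf_nonneg x), hF]
  have hIio : ∀ t, μ.map A (Iio t) = ENNReal.ofReal (F t) := by
    intro t
    rw [hf_density, withDensity_apply _ measurableSet_Iio,
      setLIntegral_congr (Iio_ae_eq_Iic' (measure_singleton t)),
      ← ofReal_integral_eq_lintegral_ofReal hInt.integrableOn
        (ae_of_all _ fun x => hf_nonneg x), hF]
  have hIoi : ∀ t, μ.map A (Ioi t) = ENNReal.ofReal (1 - F t) := by
    intro t
    rw [← compl_Iic, prob_compl_eq_one_sub measurableSet_Iic, hIic,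
      ← ENNReal.ofReal_one, ← ENNReal.ofReal_sub _ (hF0 t)]
  have hIci : ∀ t, μ.map A (Ici t) = ENNReal.ofReal (1 - F t) := by
    intro t
    rw [← compl_Iio, prob_compl_eq_one_sub measurableSet_Iio, hIio,
      ← ENNReal.ofReal_one, ← ENNReal.ofReal_sub _ (hF0 t)]
  -- LHS on Iic t
  have hApre : ∀ (s : Set ℝ), MeasurableSet s → μ (A ⁻¹' s) = μ.map A s :=
    fun s hs => (Measure.map_apply hA hs).symm
  have hBpre : ∀ (s : Set ℝ), MeasurableSet s → μ (B ⁻¹' s) = μ.map A s :=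
    fun s hs => by rw [← hmapB]; exact (Measure.map_apply hB hs).symm
  have hLHS : ∀ t, μ.map X (Iic t) = ENNReal.ofReal (G t) := by
    intro t
    rw [Measure.map_apply hXm measurableSet_Iic]
    rcases le_or_gt 0 t with ht | ht
    · have hqp : F (-t) ≤ F t := hFmono (by linarith)
      have hsetEq : X ⁻¹' Iic t =
          (A ⁻¹' Ioi t ∩ B ⁻¹' Ioi t ∪ A ⁻¹' Iio (-t) ∩ B ⁻¹' Iio (-t))ᶜ := by
        ext ω
        simp only [mem_preimage, mem_Iic, mem_compl_iff, mem_union, mem_inter_iff, mem_Ioi,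
          mem_Iio, hX ω]
        exact key_sign_ge t _ _ ht
      have hm1 : MeasurableSet (A ⁻¹' Ioi t ∩ B ⁻¹' Ioi t) :=
        (hA measurableSet_Ioi).inter (hB measurableSet_Ioi)
      have hm2 : MeasurableSet (A ⁻¹' Iio (-t) ∩ B ⁻¹' Iio (-t)) :=
        (hA measurableSet_Iio).inter (hB measurableSet_Iio)
      have hdisj : Disjoint (A ⁻¹' Ioi t ∩ B ⁻¹' Ioi t) (A ⁻¹' Iio (-t) ∩ B ⁻¹' Iio (-t)) := by
        refine Set.disjoint_left.mpr ?_
        rintro ω ⟨h1, _⟩ ⟨h3, _⟩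
        simp only [mem_preimage, mem_Ioi, mem_Iio] at h1 h3
        linarith
      rw [hsetEq, prob_compl_eq_one_sub (hm1.union hm2), measure_union hdisj hm2,
        hindep.measure_inter_preimage_eq_mul _ _ measurableSet_Ioi measurableSet_Ioi,
        hindep.measure_inter_preimage_eq_mul _ _ measurableSet_Iio measurableSet_Iio,
        hApre _ measurableSet_Ioi, hBpre _ measurableSet_Ioi,
        hApre _ measurableSet_Iio, hBpre _ measurableSet_Iio,
        hIoi, hIio,
        ← ENNReal.ofReal_mul (by linarith [hFle1 t]), ← ENNReal.ofReal_mul (hF0 (-t)),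
        ← ENNReal.ofReal_add (by nlinarith [hFle1 t]) (by nlinarith [hF0 (-t)]),
        ← ENNReal.ofReal_one,
        ← ENNReal.ofReal_sub _ (by nlinarith [hFle1 t, hF0 (-t)])]
      congr 1
      rw [hG]
      simp only
      rw [min_eq_right (sub_nonneg.2 hqp)]
      ring
    · have hpq : F t ≤ F (-t) := hFmono (by linarith)
      have hsetEq : X ⁻¹' Iic t =
          A ⁻¹' Ici (-t) ∩ B ⁻¹' Iic t ∪ A ⁻¹' Iic t ∩ B ⁻¹' Ici (-t) := by
        ext ω
        simp only [mem_preimage, mem_Iic, mem_union, mem_inter_iff, mem_Ici, hX ω]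
        exact key_sign_lt t _ _ ht
      have hm2 : MeasurableSet (A ⁻¹' Iic t ∩ B ⁻¹' Ici (-t)) :=
        (hA measurableSet_Iic).inter (hB measurableSet_Ici)
      have hdisj : Disjoint (A ⁻¹' Ici (-t) ∩ B ⁻¹' Iic t) (A ⁻¹' Iic t ∩ B ⁻¹' Ici (-t)) := by
        refine Set.disjoint_left.mpr ?_
        rintro ω ⟨h1, _⟩ ⟨h3, _⟩
        simp only [mem_preimage, mem_Ici, mem_Iic] at h1 h3
        linarith
      rw [hsetEq, measure_union hdisj hm2,
        hindep.measure_inter_preimage_eq_mul _ _ measurableSet_Ici measurableSet_Iic,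
        hindep.measure_inter_preimage_eq_mul _ _ measurableSet_Iic measurableSet_Ici,
        hApre _ measurableSet_Ici, hBpre _ measurableSet_Iic,
        hApre _ measurableSet_Iic, hBpre _ measurableSet_Ici,
        hIci, hIic,
        ← ENNReal.ofReal_mul (by linarith [hFle1 (-t)]),
        ← ENNReal.ofReal_mul (hF0 t),
        ← ENNReal.ofReal_add (by nlinarith [hF0 t, hFle1 (-t)])
          (by nlinarith [hF0 t, hFle1 (-t)])]
      congr 1
      rw [hG]
      simp only
      rw [min_eq_left (sub_nonpos.2 hpq)]
      ring
  exact Measure.ext_of_Iic (μ.map X) _ fun t => by rw [hLHS t, hRHS t]
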